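/- Let c ≥ 1 be an integer and r : {1,…,N} → ℝ/ℤ a function taking values in the subgroup generated by 1/c. Then ∑_{1≤i,j≤N} B₂(r(i) − r(j)) ≥ N²/(12c²) − N/12, where B₂ is the periodic second Bernoulli polynomial. -/

import Mathlib

open Finset

/-- The periodic second Bernoulli polynomial. -/
noncomputable def B2 (t : ℝ) : ℝ := (Int.fract t) ^ 2 - (Int.fract t) / 2 + 1 / 12

lemma sum_range_id_real (n : ℕ) : ∑ t ∈ range n, (t : ℝ) = n * (n - 1) / 2 := by
  induction n with
  | zero => simp
  | succ n ih => rw [Finset.sum_range_succ, ih]; push_cast; ring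

lemma sum_range_sq_real (n : ℕ) :
    ∑ t ∈ range n, (t : ℝ) ^ 2 = n * (n - 1) * (2 * n - 1) / 6 := by
  induction n with
  | zero => simp
  | succ n ih => rw [Finset.sum_range_succ, ih]; push_cast; ring

lemma quad_sum (n : ℕ) (p q : ℝ) :
    ∑ t ∈ range n, ((t : ℝ) + p) * ((t : ℝ) + q)
      = n * (n - 1) * (2 * n - 1) / 6 + (p + q) * (n * (n - 1) / 2) + n * p * q := by
  have h : ∀ t : ℕ, ((t : ℝ) + p) * ((t : ℝ) + q) = (t : ℝ) ^ 2 + (p + q) * t + p * q := by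
    intro t; ring
  simp_rw [h]
  rw [Finset.sum_add_distrib, Finset.sum_add_distrib, ← Finset.mul_sum,
    sum_range_id_real, sum_range_sq_real, Finset.sum_const]
  simp [nsmul_eq_mul]
  ring

/-- centered sawtooth on `ℤ/c`. -/
noncomputable def fC (c : ℕ) (j : ℤ) : ℝ :=
  ((j % (c : ℤ) : ℤ) : ℝ) / c - ((c : ℝ) - 1) / (2 * c)

lemma fC_congr {c : ℕ} {j j' : ℤ} (h : j % (c : ℤ) = j' % (c : ℤ)) : fC c j = fC c j' := by
  unfold fC; rw [h]

lemma fC_period (c : ℕ) (j : ℤ) : fC c (j + c) = fC c j :=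
  fC_congr (by
    have := Int.add_mul_emod_self_left (a := j) (b := (c : ℤ)) (c := 1)
    simpa using this)

lemma shift_one {c : ℕ} {g : ℤ → ℝ} (hg : ∀ x, g (x + c) = g x) (b : ℤ) :
    ∑ t ∈ range c, g ((b + 1) + t) = ∑ t ∈ range c, g (b + t) := by
  have h1 : ∀ t : ℕ, g ((b + 1) + t) = g (b + ((t + 1 : ℕ) : ℤ)) := by
    intro t; congr 1; push_cast; ring
  simp_rw [h1]
  have h2 := Finset.sum_range_succ' (fun t : ℕ => g (b + t)) c
  have h3 := Finset.sum_range_succ (fun t : ℕ => g (b + t)) c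
  have h4 : g (b + (c : ℤ)) = g (b + 0) := by
    rw [add_comm b (c : ℤ)]
    have := hg b
    rw [add_comm] at this
    simpa using this
  push_cast at h2 h3 h4 ⊢
  linarith [h2, h3, h4]

lemma shift_sum {c : ℕ} {g : ℤ → ℝ} (hg : ∀ x, g (x + c) = g x) (b : ℤ) :
    ∑ t ∈ range c, g (b + t) = ∑ t ∈ range c, g t := by
  induction b using Int.induction_on with
  | zero => simp
  | succ k ih => rw [shift_one hg k]; exact ih
  | pred k ih =>
      have h := shift_one hg (-(k : ℤ) - 1)
      rw [show -(k : ℤ) - 1 + 1 = -(k : ℤ) by ring] at h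
      have hgoal : ∑ t ∈ range c, g (-(k : ℤ) - 1 + t) = ∑ t ∈ range c, g t := by
        rw [← h]; exact ih
      first
      | exact hgoal
      | (convert hgoal using 3 <;> push_cast <;> ring)

set_option maxRecDepth 8000 in
lemma T_val (c : ℕ) (hc : 1 ≤ c) (d : ℕ) (hd : d < c) :
    ∑ t ∈ range c, fC c ((d : ℤ) + t) * fC c t
      = ((c : ℝ) ^ 2 - 1) / (12 * c) - (d : ℝ) * ((c : ℝ) - d) / (2 * c) := by
  have hc0 : (0:ℝ) < c := by positivity
  set e : ℕ := c - d with he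
  have hce : c = e + d := by omega
  have hsplit : ∑ t ∈ range c, fC c ((d : ℤ) + t) * fC c t
      = (∑ t ∈ range e, fC c ((d : ℤ) + t) * fC c t)
        + ∑ u ∈ range d, fC c ((d : ℤ) + ((e : ℤ) + u)) * fC c ((e : ℤ) + u) := by
    rw [hce, Finset.sum_range_add]
    refine congrArg₂ (· + ·) rfl (Finset.sum_congr rfl fun u _ => ?_)
    first
    | (push_cast; ring)
    | push_cast
    | rfl
  rw [hsplit]
  have hfC : ∀ j : ℤ, 0 ≤ j → j < (c:ℤ) → fC c j = ((j:ℝ) - ((c:ℝ) - 1) / 2) / c := by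
    intro j h0 h1
    unfold fC
    rw [Int.emod_eq_of_lt h0 h1]
    field_simp
  have h1 : ∀ t ∈ range e, fC c ((d : ℤ) + t) * fC c t
      = (((t:ℝ) + ((d:ℝ) - ((c:ℝ) - 1) / 2)) * ((t:ℝ) + (0 - ((c:ℝ) - 1) / 2))) / c ^ 2 := by
    intro t ht
    simp only [Finset.mem_range] at ht
    rw [hfC ((d:ℤ)+t) (by positivity) (by push_cast; omega),
        hfC t (by positivity) (by push_cast; omega)]
    push_cast
    field_simp
    ring
  have h2 : ∀ u ∈ range d, fC c ((d : ℤ) + ((e : ℤ) + u)) * fC c ((e : ℤ) + u)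
      = (((u:ℝ) + (0 - ((c:ℝ) - 1) / 2)) * ((u:ℝ) + ((e:ℝ) - ((c:ℝ) - 1) / 2))) / c ^ 2 := by
    intro u hu
    simp only [Finset.mem_range] at hu
    have harg : ((d:ℤ) + ((e:ℤ) + u)) % (c:ℤ) = (u:ℤ) % (c:ℤ) := by
      have hq : (d:ℤ) + ((e:ℤ) + u) = (u:ℤ) + (c:ℤ) * 1 := by push_cast; omega
      rw [hq, Int.add_mul_emod_self_left]
    rw [fC_congr harg,
        hfC u (by positivity) (by push_cast; omega),
        hfC ((e:ℤ)+u) (by positivity) (by push_cast; omega)]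
    push_cast
    field_simp
    ring
  rw [Finset.sum_congr rfl h1, Finset.sum_congr rfl h2]
  rw [← Finset.sum_div, ← Finset.sum_div, quad_sum, quad_sum]
  have hcr : (c:ℝ) = (e:ℝ) + (d:ℝ) := by rw [hce]; push_cast; ring
  have hd0 : (0:ℝ) ≤ (d:ℝ) := by positivity
  rw [hcr]
  have hed : (0:ℝ) < (e:ℝ) + (d:ℝ) := by rw [← hcr]; exact hc0
  field_simp
  ring

lemma fract_int_div (c : ℕ) (hc : 1 ≤ c) (n : ℤ) :
    Int.fract ((n : ℝ) / c) = ((n % (c : ℤ) : ℤ) : ℝ) / c := by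
  have hc0 : (0:ℝ) < c := by positivity
  have hcz : (0:ℤ) < (c:ℤ) := by exact_mod_cast hc
  have h := Int.mul_ediv_add_emod n (c : ℤ)
  have h' : (n : ℝ) = (c:ℝ) * ((n / (c:ℤ) : ℤ) : ℝ) + ((n % (c:ℤ) : ℤ) : ℝ) := by
    exact_mod_cast h.symm
  have : (n : ℝ) / c = (n / (c:ℤ) : ℤ) + ((n % (c:ℤ) : ℤ) : ℝ) / c := by
    rw [h', add_div, mul_comm, mul_div_assoc, div_self hc0.ne', mul_one]
  rw [this, Int.fract_intCast_add, Int.fract_eq_self.mpr]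
  constructor
  · have := Int.emod_nonneg n (by omega : (c:ℤ) ≠ 0)
    positivity
  · rw [div_lt_one hc0]
    exact_mod_cast Int.emod_lt_of_pos n hcz

lemma pair_id (c : ℕ) (hc : 1 ≤ c) (a b : ℤ) :
    Int.fract ((a : ℝ) / c - (b : ℝ) / c) ^ 2 - Int.fract ((a : ℝ) / c - (b : ℝ) / c) + 1 / 6
      = (2 / c) * ∑ t ∈ range c, fC c (a + t) * fC c (b + t) + 1 / (6 * (c : ℝ) ^ 2) := by
  have hc0 : (0:ℝ) < c := by positivity
  have hcz : (0:ℤ) < (c:ℤ) := by exact_mod_cast hc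
  set d : ℤ := (a - b) % (c : ℤ) with hdd
  have hd0 : 0 ≤ d := Int.emod_nonneg _ (by omega)
  have hd1 : d < (c : ℤ) := Int.emod_lt_of_pos _ hcz
  -- fract part
  have hfr : Int.fract ((a : ℝ) / c - (b : ℝ) / c) = (d : ℝ) / c := by
    have : (a : ℝ) / c - (b : ℝ) / c = ((a - b : ℤ) : ℝ) / c := by push_cast; ring
    rw [this, fract_int_div c hc]
  -- sum part
  have hper : ∀ x : ℤ, fC c ((a - b) + (x + (c:ℤ))) * fC c (x + (c:ℤ))
      = fC c ((a - b) + x) * fC c x := by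
    intro x
    rw [show (a - b) + (x + (c:ℤ)) = ((a-b) + x) + (c:ℤ) by ring, fC_period, fC_period]
  have hsum1 : ∑ t ∈ range c, fC c (a + t) * fC c (b + t)
      = ∑ t ∈ range c, fC c ((a - b) + t) * fC c t := by
    have := shift_sum (g := fun x => fC c ((a - b) + x) * fC c x) hper b
    rw [← this]
    apply Finset.sum_congr rfl
    intro t _
    congr 2
    ring
  have hsum2 : ∑ t ∈ range c, fC c ((a - b) + t) * fC c t
      = ∑ t ∈ range c, fC c (d + t) * fC c t := by
    apply Finset.sum_congr rfl
    intro t _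
    congr 1
    apply fC_congr
    rw [Int.add_emod, hdd, Int.add_emod ((a - b) % (c:ℤ)) t, Int.emod_emod_of_dvd _ dvd_rfl]
  have hdn : d = ((d.toNat : ℕ) : ℤ) := by omega
  have hdnc : d.toNat < c := by omega
  have hT := T_val c hc d.toNat hdnc
  rw [hfr, hsum1, hsum2, hdn, hT]
  have hdr : ((d.toNat : ℕ) : ℝ) = (d : ℝ) := by
    rw [← Int.cast_natCast, Int.toNat_of_nonneg hd0]
  rw [hdr]
  field_simp
  rw [Int.cast_natCast, hdr]
  ring

lemma B2_ge (x : ℝ) : (Int.fract x ^ 2 - Int.fract x + 1 / 6) / 2 ≤ B2 x := by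
  unfold B2
  nlinarith [Int.fract_nonneg x, sq_nonneg (Int.fract x)]

theorem stmt4 (c N : ℕ) (hc : 1 ≤ c) (r : Fin N → ℝ)
    (hr : ∀ i, ∃ k : ℤ, r i = (k : ℝ) / c) :
    (N : ℝ) ^ 2 / (12 * (c : ℝ) ^ 2) - (N : ℝ) / 12 ≤ ∑ i, ∑ j, B2 (r i - r j) := by
  have hc0 : (0:ℝ) < c := by positivity
  choose k hk using hr
  have step1 : ∑ i, ∑ j, (Int.fract (r i - r j) ^ 2 - Int.fract (r i - r j) + 1 / 6) / 2
      ≤ ∑ i, ∑ j, B2 (r i - r j) := by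
    apply Finset.sum_le_sum
    intro i _
    apply Finset.sum_le_sum
    intro j _
    exact B2_ge _
  have step2 : ∀ i j : Fin N,
      (Int.fract (r i - r j) ^ 2 - Int.fract (r i - r j) + 1 / 6) / 2
      = (1 / c) * ∑ t ∈ range c, fC c (k i + t) * fC c (k j + t) + 1 / (12 * (c : ℝ) ^ 2) := by
    intro i j
    have : r i - r j = (k i : ℝ) / c - (k j : ℝ) / c := by rw [hk i, hk j]
    rw [this, pair_id c hc (k i) (k j)]
    ring
  have step3 : ∑ i, ∑ j, ((1 / (c:ℝ)) * ∑ t ∈ range c, fC c (k i + t) * fC c (k j + t)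
        + 1 / (12 * (c : ℝ) ^ 2))
      = (1 / (c:ℝ)) * ∑ t ∈ range c, (∑ i, fC c (k i + t)) ^ 2
        + (N : ℝ) ^ 2 / (12 * (c : ℝ) ^ 2) := by
    have hswap : ∑ t ∈ range c, (∑ i, fC c (k i + t)) ^ 2
        = ∑ i, ∑ j, ∑ t ∈ range c, fC c (k i + t) * fC c (k j + t) := by
      have h1 : ∀ t : ℕ, (∑ i, fC c (k i + t)) ^ 2
          = ∑ i, ∑ j, fC c (k i + t) * fC c (k j + t) := by
        intro t; rw [sq, Finset.sum_mul_sum]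
      simp_rw [h1]
      rw [Finset.sum_comm]
      exact Finset.sum_congr rfl fun i _ => Finset.sum_comm
    rw [hswap]
    simp only [Finset.sum_add_distrib, Finset.sum_const, Finset.card_univ, Fintype.card_fin,
      nsmul_eq_mul, ← Finset.mul_sum]
    ring
  have hnn : 0 ≤ (1 / (c:ℝ)) * ∑ t ∈ range c, (∑ i, fC c (k i + t)) ^ 2 := by
    apply mul_nonneg (by positivity)
    exact Finset.sum_nonneg fun t _ => sq_nonneg _
  calc (N : ℝ) ^ 2 / (12 * (c : ℝ) ^ 2) - (N : ℝ) / 12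
      ≤ (N : ℝ) ^ 2 / (12 * (c : ℝ) ^ 2) := by
        have : (0:ℝ) ≤ (N:ℝ)/12 := by positivity
        linarith
    _ ≤ (1 / (c:ℝ)) * ∑ t ∈ range c, (∑ i, fC c (k i + t)) ^ 2
        + (N : ℝ) ^ 2 / (12 * (c : ℝ) ^ 2) := by linarith
    _ = ∑ i, ∑ j, ((1 / (c:ℝ)) * ∑ t ∈ range c, fC c (k i + t) * fC c (k j + t)
        + 1 / (12 * (c : ℝ) ^ 2)) := step3.symm
    _ = ∑ i, ∑ j, (Int.fract (r i - r j) ^ 2 - Int.fract (r i - r j) + 1 / 6) / 2 := by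
        exact Finset.sum_congr rfl fun i _ => Finset.sum_congr rfl fun j _ => (step2 i j).symm
    _ ≤ ∑ i, ∑ j, B2 (r i - r j) := step1
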